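/- Assume X and Y are nonempty and bounded, and let h ∈ ℝ. Then the system {A x ≤ a, xᵀC y + g·x + e·y < h, B y ≤ b, x ≥ 0, y ≥ 0} has no solution (x, y) if and only if for every y ∈ Y the system {−Aᵀu ≤ C y + g, a·u ≤ e·y − h, u ≥ 0} has a solution u ∈ ℝ^q. Moreover, the maximal value h* of h for which the latter consistency property holds for every y ∈ Y equals the minimum of z over X × Y. -/

import Mathlib

open Matrix

open Finset in

lemma cone_isClosed_fin {ι : Type*} [Fintype ι] :
    ∀ (k : ℕ) (v : Fin k → EuclideanSpace ℝ ι),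
    IsClosed {x : EuclideanSpace ℝ ι | ∃ c : Fin k → ℝ, (∀ i, 0 ≤ c i) ∧ ∑ i, c i • v i = x} := by
  intro k
  induction k with
  | zero =>
    intro v
    have : {x : EuclideanSpace ℝ ι | ∃ c : Fin 0 → ℝ, (∀ i, 0 ≤ c i) ∧ ∑ i, c i • v i = x}
        = {0} := by
      ext x
      simp [eq_comm]
    rw [this]
    exact isClosed_singleton
  | succ k ih =>
    intro v
    by_cases hli : LinearIndependent ℝ v
    · -- linearly independent case: image of closed orthant under closed embedding
      let L : (Fin (k+1) → ℝ) →ₗ[ℝ] EuclideanSpace ℝ ι :=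
        { toFun := fun c => ∑ i, c i • v i
          map_add' := by
            intro c c'
            simp [add_smul, Finset.sum_add_distrib]
          map_smul' := by
            intro r c
            simp [smul_smul, Finset.smul_sum] }
      have hker : LinearMap.ker L = ⊥ := by
        rw [LinearMap.ker_eq_bot']
        intro c hc
        funext i
        exact (Fintype.linearIndependent_iff.mp hli c hc) i
      have hemb := LinearMap.isClosedEmbedding_of_injective (f := L) hker
      have horth : IsClosed {c : Fin (k+1) → ℝ | ∀ i, 0 ≤ c i} := by
        have : {c : Fin (k+1) → ℝ | ∀ i, 0 ≤ c i} = Set.univ.pi (fun _ => Set.Ici 0) := by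
          ext c
          simp only [Set.mem_setOf_eq, Set.mem_pi, Set.mem_univ, Set.mem_Ici, true_implies]
        rw [this]
        exact isClosed_set_pi (fun i _ => isClosed_Ici)
      have himg : {x : EuclideanSpace ℝ ι | ∃ c : Fin (k+1) → ℝ, (∀ i, 0 ≤ c i) ∧ ∑ i, c i • v i = x}
          = L '' {c | ∀ i, 0 ≤ c i} := by
        ext x
        simp only [Set.mem_image, Set.mem_setOf_eq]
        constructor
        · rintro ⟨c, hc, hsum⟩; exact ⟨c, hc, hsum⟩
        · rintro ⟨c, hc, hsum⟩; exact ⟨c, hc, hsum⟩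
      rw [himg]
      exact hemb.isClosedMap _ horth
    · -- dependent case: the cone is a finite union of cones on fewer generators
      obtain ⟨lam, hlamsum, i1, hi1⟩ := Fintype.not_linearIndependent_iff.mp hli
      -- get μ with ∑ μ i • v i = 0 and some μ i < 0
      obtain ⟨μ, hμsum, hμneg⟩ : ∃ μ : Fin (k+1) → ℝ,
          ∑ i, μ i • v i = 0 ∧ ∃ i, μ i < 0 := by
        rcases lt_or_gt_of_ne hi1 with hlt | hgt
        · exact ⟨lam, hlamsum, i1, hlt⟩
        · refine ⟨-lam, ?_, i1, by simpa using hgt⟩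
          have : ∑ i, (-lam) i • v i = -∑ i, lam i • v i := by
            simp [neg_smul]
          rw [this, hlamsum, neg_zero]
      have hunion : {x : EuclideanSpace ℝ ι | ∃ c : Fin (k+1) → ℝ, (∀ i, 0 ≤ c i) ∧ ∑ i, c i • v i = x}
          = ⋃ i0 : Fin (k+1), {x : EuclideanSpace ℝ ι |
              ∃ c : Fin k → ℝ, (∀ i, 0 ≤ c i) ∧ ∑ j, c j • v (i0.succAbove j) = x} := by
        ext x
        simp only [Set.mem_setOf_eq, Set.mem_iUnion]
        constructor
        · rintro ⟨c, hc, hsum⟩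
          -- find minimizing index among negative μ coordinates
          obtain ⟨i0, hi0mem, hi0min⟩ := Finset.exists_min_image
            (Finset.univ.filter (fun i => μ i < 0)) (fun i => c i / (-μ i))
            ⟨hμneg.choose, by simp [hμneg.choose_spec]⟩
          have hμi0 : μ i0 < 0 := (Finset.mem_filter.mp hi0mem).2
          set t : ℝ := c i0 / (-μ i0) with ht
          have ht0 : 0 ≤ t := div_nonneg (hc i0) (by linarith)
          set c'' : Fin (k+1) → ℝ := fun i => c i + t * μ i with hc''
          have hc''nonneg : ∀ i, 0 ≤ c'' i := by
            intro i
            rcases le_or_gt 0 (μ i) with hpos | hneg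
            · have : 0 ≤ t * μ i := mul_nonneg ht0 hpos
              simp only [hc'']; linarith [hc i]
            · have hmem : i ∈ Finset.univ.filter (fun i => μ i < 0) := by
                simp [hneg]
              have := hi0min i hmem
              have h2 : t * (-μ i) ≤ c i := by
                rw [← le_div_iff₀ (by linarith : (0:ℝ) < -μ i)]
                exact this
              simp only [hc'']; nlinarith
          have hc''i0 : c'' i0 = 0 := by
            have hne : -μ i0 ≠ 0 := by linarith
            simp only [hc'', ht]
            field_simp
            simp [div_self (show μ i0 ≠ 0 by linarith)]
          have hc''sum : ∑ i, c'' i • v i = x := by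
            have : ∑ i, c'' i • v i = ∑ i, c i • v i + t • ∑ i, μ i • v i := by
              rw [Finset.smul_sum]
              rw [← Finset.sum_add_distrib]
              congr 1
              funext i
              rw [hc'']
              rw [add_smul, smul_smul]
            rw [this, hμsum, smul_zero, add_zero, hsum]
          refine ⟨i0, fun j => c'' (i0.succAbove j), fun j => hc''nonneg _, ?_⟩
          have := Fin.sum_univ_succAbove (fun i => c'' i • v i) i0
          rw [hc''i0, zero_smul, zero_add] at this
          rw [← this, hc''sum]
        · rintro ⟨i0, c, hc, hsum⟩
          have c' : Fin (k+1) → ℝ := i0.insertNth 0 c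
          refine ⟨(i0.insertNth 0 c : Fin (k+1) → ℝ), ?_, ?_⟩
          · intro i
            refine Fin.succAboveCases i0 ?_ ?_ i
            · simp
            · intro j; simpa using hc j
          · have hs := Fin.sum_univ_succAbove
              (fun i => (i0.insertNth 0 c : Fin (k+1) → ℝ) i • v i) i0
            rw [hs]
            simp [hsum]
      rw [hunion]
      exact isClosed_iUnion_of_finite (fun i0 => ih _)

lemma cone_isClosed {ι κ : Type*} [Fintype ι] [Fintype κ] (v : κ → EuclideanSpace ℝ ι) :
    IsClosed {x : EuclideanSpace ℝ ι | ∃ c : κ → ℝ, (∀ i, 0 ≤ c i) ∧ ∑ i, c i • v i = x} := by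
  let eqv : κ ≃ Fin (Fintype.card κ) := Fintype.equivFin κ
  have hfin := cone_isClosed_fin (Fintype.card κ) (v ∘ eqv.symm)
  have hset : {x : EuclideanSpace ℝ ι | ∃ c : κ → ℝ, (∀ i, 0 ≤ c i) ∧ ∑ i, c i • v i = x}
      = {x : EuclideanSpace ℝ ι | ∃ c : Fin (Fintype.card κ) → ℝ,
          (∀ i, 0 ≤ c i) ∧ ∑ i, c i • (v ∘ eqv.symm) i = x} := by
    ext x
    simp only [Set.mem_setOf_eq, Function.comp_apply]
    constructor
    · rintro ⟨c, hc, rfl⟩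
      exact ⟨c ∘ eqv.symm, fun i => hc _, Equiv.sum_comp eqv.symm (fun i => c i • v i)⟩
    · rintro ⟨c, hc, rfl⟩
      refine ⟨c ∘ eqv, fun i => hc _, ?_⟩
      rw [← Equiv.sum_comp eqv.symm (fun i => (c ∘ eqv) i • v i)]
      simp
  rw [hset]
  exact hfin

open scoped InnerProductSpace in
lemma farkas_cone {p r : Type*} [Fintype p] [Fintype r] (v : r → (p → ℝ)) (d : p → ℝ)
    (hyp : ∀ u : p → ℝ, (∀ j, 0 ≤ v j ⬝ᵥ u) → 0 ≤ d ⬝ᵥ u) :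
    ∃ c : r → ℝ, (∀ j, 0 ≤ c j) ∧ ∑ j, c j • v j = d := by
  classical
  let E := EuclideanSpace ℝ p
  let v' : r → E := fun j => WithLp.toLp 2 (v j)
  have hinner : ∀ x y : E, ⟪x, y⟫_ℝ = x.ofLp ⬝ᵥ y.ofLp := by
    intro x y
    rw [show ⟪x, y⟫_ℝ = ∑ i, x i * y i from by rw [PiLp.inner_apply]; simp [mul_comm]]
    rfl
  let S : Set E := {x | ∃ c : r → ℝ, (∀ j, 0 ≤ c j) ∧ ∑ j, c j • v' j = x}
  let K : ConvexCone ℝ E :=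
    { carrier := S
      smul_mem' := by
        rintro t ht x ⟨c, hc, rfl⟩
        exact ⟨fun j => t * c j, fun j => mul_nonneg ht.le (hc j), by
          rw [Finset.smul_sum]; exact Finset.sum_congr rfl (fun j _ => by rw [smul_smul])⟩
      add_mem' := by
        rintro x ⟨c, hc, rfl⟩ y ⟨c', hc', rfl⟩
        exact ⟨fun j => c j + c' j, fun j => add_nonneg (hc j) (hc' j), by
          rw [← Finset.sum_add_distrib]
          exact Finset.sum_congr rfl (fun j _ => by rw [add_smul])⟩ }
  by_contra hcon
  have hd : (WithLp.toLp 2 d : E) ∉ K := by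
    intro hdK
    obtain ⟨c, hc, hsum⟩ := hdK
    exact hcon ⟨c, hc, by have := congrArg WithLp.ofLp hsum; rw [WithLp.ofLp_sum] at this; exact this⟩
  have hne : (K : Set E).Nonempty := ⟨0, ⟨0, fun j => le_rfl, by simp⟩⟩
  have hcl : IsClosed (K : Set E) := cone_isClosed v'
  obtain ⟨u, hu1, hu2⟩ :=
    ProperCone.hyperplane_separation' (E := E) (x₀ := WithLp.toLp 2 d)
      { carrier := S
        add_mem' := fun hx hy => K.add_mem' hx hy
        zero_mem' := ⟨0, fun j => le_rfl, by simp⟩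
        smul_mem' := by
          rintro ⟨t, ht⟩ x ⟨c, hc, rfl⟩
          refine ⟨fun j => t * c j, fun j => mul_nonneg ht (hc j), ?_⟩
          show ∑ j, (t * c j) • v' j = t • ∑ j, c j • v' j
          rw [Finset.smul_sum]; exact Finset.sum_congr rfl (fun j _ => by rw [smul_smul])
        isClosed' := hcl } hd
  have hvj : ∀ j, (v' j : E) ∈ K := by
    intro j
    refine ⟨fun j' => if j' = j then 1 else 0, fun j' => by positivity, ?_⟩
    simp [ite_smul]
  have h1 : ∀ j, 0 ≤ v j ⬝ᵥ u.ofLp := by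
    intro j
    have := hu1 (v' j) (hvj j)
    rwa [hinner] at this
  have h2 : 0 ≤ d ⬝ᵥ u.ofLp := hyp u.ofLp h1
  rw [hinner] at hu2
  have : u.ofLp ⬝ᵥ d = d ⬝ᵥ u.ofLp := dotProduct_comm _ _
  simp only [WithLp.ofLp_toLp] at hu2
  linarith

lemma lp_dual {q n : ℕ} (A : Matrix (Fin q) (Fin n) ℝ) (a : Fin q → ℝ) (c : Fin n → ℝ)
    (hne : ∃ x : Fin n → ℝ, A.mulVec x ≤ a ∧ 0 ≤ x)
    (hbd : Bornology.IsBounded {x : Fin n → ℝ | A.mulVec x ≤ a ∧ 0 ≤ x})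
    (β : ℝ) (hβ : ∀ x : Fin n → ℝ, A.mulVec x ≤ a → 0 ≤ x → β ≤ c ⬝ᵥ x) :
    ∃ u : Fin q → ℝ, 0 ≤ u ∧ -(Aᵀ.mulVec u) ≤ c ∧ a ⬝ᵥ u ≤ -β := by
  classical
  -- generators for the Farkas cone in coordinates `Fin n ⊕ Unit`
  let v : (Fin q ⊕ (Fin n ⊕ Unit)) → ((Fin n ⊕ Unit) → ℝ) := fun j =>
    match j with
    | Sum.inl i => Sum.elim (fun j' => A i j') (fun _ => a i)
    | Sum.inr (Sum.inl j0) => Sum.elim (fun j' => if j' = j0 then (-1:ℝ) else 0) (fun _ => 0)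
    | Sum.inr (Sum.inr _) => Sum.elim (fun _ => (0:ℝ)) (fun _ => 1)
  let d : (Fin n ⊕ Unit) → ℝ := Sum.elim (fun j => -c j) (fun _ => -β)
  have key : ∃ w : (Fin q ⊕ (Fin n ⊕ Unit)) → ℝ, (∀ j, 0 ≤ w j) ∧ ∑ j, w j • v j = d := by
    apply farkas_cone
    intro u' hu'
    -- decode: x = -(u' ∘ inl), t = u' (inr ())
    set x : Fin n → ℝ := fun j => -(u' (Sum.inl j)) with hx
    set t : ℝ := u' (Sum.inr ()) with htdef
    have hxnn : 0 ≤ x := by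
      intro j
      have := hu' (Sum.inr (Sum.inl j))
      simp only [v, dotProduct, Fintype.sum_sum_type] at this
      simp only [Sum.elim_inl, Sum.elim_inr, ite_mul, neg_mul, one_mul, zero_mul] at this
      rw [Finset.sum_ite_eq' Finset.univ j (fun j' => -(u' (Sum.inl j')))] at this
      simp only [Finset.mem_univ, if_true, Finset.sum_const_zero, add_zero] at this
      simpa [hx] using this
    have htnn : 0 ≤ t := by
      have := hu' (Sum.inr (Sum.inr ()))
      simpa [v, dotProduct, Fintype.sum_sum_type, htdef] using this
    have hAx : ∀ i, (A.mulVec x) i ≤ a i * t := by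
      intro i
      have := hu' (Sum.inl i)
      simp only [v, dotProduct, Fintype.sum_sum_type, Sum.elim_inl, Sum.elim_inr] at this
      have hsum : ∑ j, A i j * u' (Sum.inl j) = -((A.mulVec x) i) := by
        simp only [Matrix.mulVec, dotProduct, hx]
        rw [← Finset.sum_neg_distrib]
        exact Finset.sum_congr rfl (fun j _ => by ring)
      rw [hsum] at this
      simp only [Finset.univ_unique, Finset.sum_singleton] at this
      have : 0 ≤ -((A.mulVec x) i) + a i * t := by
        convert this using 2
      linarith
    -- goal: 0 ≤ d ⬝ᵥ u' = c ⬝ᵥ x - β * t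
    have hgoal : d ⬝ᵥ u' = c ⬝ᵥ x - β * t := by
      simp only [d, dotProduct, Fintype.sum_sum_type, Sum.elim_inl, Sum.elim_inr,
        Finset.univ_unique, Finset.sum_singleton, hx]
      have : ∑ j, -c j * u' (Sum.inl j) = ∑ j, c j * -(u' (Sum.inl j)) :=
        Finset.sum_congr rfl (fun j _ => by ring)
      rw [this]; ring_nf
      rfl
    rw [hgoal]
    rcases eq_or_lt_of_le htnn with ht0 | htpos
    · -- t = 0 : recession direction must be 0 by boundedness
      have hAx0 : A.mulVec x ≤ 0 := by
        intro i; have := hAx i; rw [← ht0] at this; simpa using this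
      have hx0 : x = 0 := by
        by_contra hxne
        obtain ⟨j, hj⟩ : ∃ j, x j ≠ 0 := by
          by_contra hall; push_neg at hall; exact hxne (funext hall)
        have hxjpos : 0 < x j := lt_of_le_of_ne (hxnn j) (Ne.symm hj)
        obtain ⟨x0, hx0a, hx0nn⟩ := hne
        obtain ⟨R, hR⟩ := isBounded_iff_forall_norm_le.mp hbd
        have hRnn : 0 ≤ R := le_trans (norm_nonneg x0) (hR x0 ⟨hx0a, hx0nn⟩)
        set s : ℝ := (R + 1 + |x0 j|) / (x j) with hs
        have hsnn : 0 ≤ s := div_nonneg (by positivity) hxjpos.le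
        have hmem : x0 + s • x ∈ {x : Fin n → ℝ | A.mulVec x ≤ a ∧ 0 ≤ x} := by
          constructor
          · intro i
            have : (A.mulVec (x0 + s • x)) i = (A.mulVec x0) i + s * (A.mulVec x) i := by
              rw [Matrix.mulVec_add, Matrix.mulVec_smul]
              simp
            rw [this]
            have h1 : s * (A.mulVec x) i ≤ 0 := mul_nonpos_of_nonneg_of_nonpos hsnn (hAx0 i)
            have h2 := hx0a i
            linarith
          · intro i
            have : 0 ≤ s * x i := mul_nonneg hsnn (hxnn i)
            simp only [Pi.add_apply, Pi.smul_apply, smul_eq_mul]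
            linarith [hx0nn i]
        have hnorm := hR _ hmem
        have habs : |(x0 + s • x) j| ≤ ‖x0 + s • x‖ := by
          have := norm_le_pi_norm (x0 + s • x) j
          simpa using this
        have hval : (x0 + s • x) j = x0 j + s * x j := by simp
        have hsx : s * x j = R + 1 + |x0 j| := by
          rw [hs]; field_simp
        have : x0 j + s * x j ≥ R + 1 := by
          have := abs_le.mp (le_refl |x0 j|)
          have h3 : -|x0 j| ≤ x0 j := neg_abs_le _
          linarith [hsx]
        have h4 : (x0 + s • x) j ≤ |(x0 + s • x) j| := le_abs_self _
        rw [hval] at h4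
        linarith [le_trans h4 (le_trans habs hnorm)]
      rw [hx0, ← ht0]
      simp
    · -- t > 0 : scale to a feasible point
      set y : Fin n → ℝ := t⁻¹ • x with hy
      have hya : A.mulVec y ≤ a := by
        intro i
        have : (A.mulVec y) i = t⁻¹ * (A.mulVec x) i := by
          rw [hy, Matrix.mulVec_smul]; simp
        rw [this]
        have := hAx i
        rw [inv_mul_le_iff₀ htpos]
        linarith
      have hynn : 0 ≤ y := fun j => mul_nonneg (inv_nonneg.mpr htnn) (hxnn j)
      have hβy := hβ y hya hynn
      have hcy : c ⬝ᵥ y = t⁻¹ * (c ⬝ᵥ x) := by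
        simp only [hy, dotProduct, Finset.mul_sum]
        exact Finset.sum_congr rfl (fun j _ => by simp [Pi.smul_apply]; ring)
      rw [hcy] at hβy
      have : β * t ≤ c ⬝ᵥ x := by
        have := (le_inv_mul_iff₀ htpos).mp hβy
        linarith [this]
      linarith
  -- extract the dual solution
  obtain ⟨w, hw, hsum⟩ := key
  refine ⟨fun i => w (Sum.inl i), fun i => hw _, ?_, ?_⟩
  · intro j0
    have e := congrFun hsum (Sum.inl j0)
    rw [Finset.sum_apply] at e
    simp only [Pi.smul_apply, smul_eq_mul, Fintype.sum_sum_type, Fintype.sum_unique,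
      v, d, Sum.elim_inl, Sum.elim_inr, mul_zero, mul_ite, mul_neg_one, add_zero,
      Finset.sum_ite_eq, Finset.mem_univ, if_true] at e
    have hAT : (Aᵀ.mulVec (fun i => w (Sum.inl i))) j0 = ∑ i, w (Sum.inl i) * A i j0 := by
      simp only [Matrix.mulVec, dotProduct, Matrix.transpose_apply]
      exact Finset.sum_congr rfl (fun i _ => mul_comm _ _)
    simp only [Pi.neg_apply, hAT]
    have := hw (Sum.inr (Sum.inl j0))
    linarith [e]
  · have e := congrFun hsum (Sum.inr ())
    rw [Finset.sum_apply] at e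
    simp only [Pi.smul_apply, smul_eq_mul, Fintype.sum_sum_type, Fintype.sum_unique,
      v, d, Sum.elim_inl, Sum.elim_inr, mul_zero, mul_one, add_zero,
      Finset.sum_const_zero, zero_add] at e
    have hau : a ⬝ᵥ (fun i => w (Sum.inl i)) = ∑ i, w (Sum.inl i) * a i := by
      simp only [dotProduct]
      exact Finset.sum_congr rfl (fun i _ => mul_comm _ _)
    rw [hau]
    have := hw (Sum.inr (Sum.inr ()))
    linarith [e]

lemma dot_le_dot {k : ℕ} {u v w : Fin k → ℝ} (h1 : 0 ≤ u) (h2 : v ≤ w) :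
    u ⬝ᵥ v ≤ u ⬝ᵥ w :=
  Finset.sum_le_sum fun i _ => mul_le_mul_of_nonneg_left (h2 i) (h1 i)

lemma weak_dual {q n : ℕ} (A : Matrix (Fin q) (Fin n) ℝ) (a : Fin q → ℝ) (c : Fin n → ℝ)
    (u : Fin q → ℝ) (x : Fin n → ℝ) (h1 : -(Aᵀ.mulVec u) ≤ c) (h2 : 0 ≤ u)
    (h3 : A.mulVec x ≤ a) (h4 : 0 ≤ x) : -(a ⬝ᵥ u) ≤ c ⬝ᵥ x := by
  have step1 : x ⬝ᵥ (-(Aᵀ.mulVec u)) ≤ x ⬝ᵥ c := dot_le_dot h4 h1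
  have step2 : u ⬝ᵥ (A.mulVec x) ≤ u ⬝ᵥ a := dot_le_dot h2 h3
  have id1 : x ⬝ᵥ (-(Aᵀ.mulVec u)) = -(u ⬝ᵥ (A.mulVec x)) := by
    rw [dotProduct_neg, Matrix.dotProduct_mulVec, ← Matrix.mulVec_transpose,
      dotProduct_comm, Matrix.transpose_transpose]
  rw [id1] at step1
  rw [dotProduct_comm x c] at step1
  rw [dotProduct_comm a u]
  linarith

lemma per_y_duality {q n : ℕ} (A : Matrix (Fin q) (Fin n) ℝ) (a : Fin q → ℝ)
    (c : Fin n → ℝ) (ey h' : ℝ)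
    (hne : ∃ x : Fin n → ℝ, A.mulVec x ≤ a ∧ 0 ≤ x)
    (hbd : Bornology.IsBounded {x : Fin n → ℝ | A.mulVec x ≤ a ∧ 0 ≤ x}) :
    (∀ x : Fin n → ℝ, A.mulVec x ≤ a → 0 ≤ x → h' ≤ c ⬝ᵥ x + ey) ↔
      ∃ u : Fin q → ℝ, -(Aᵀ.mulVec u) ≤ c ∧ a ⬝ᵥ u ≤ ey - h' ∧ 0 ≤ u := by
  constructor
  · intro hall
    obtain ⟨u, hu0, hud, hua⟩ := lp_dual A a c hne hbd (h' - ey)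
      (fun x hxa hx0 => by have := hall x hxa hx0; linarith)
    exact ⟨u, hud, by linarith, hu0⟩
  · rintro ⟨u, hud, hua, hu0⟩ x hxa hx0
    have := weak_dual A a c u x hud hu0 hxa hx0
    linarith

/-- Theorem 3 (first part) of the paper: inconsistency of the strict bilinear
system is equivalent to consistency of the dual system for every `y ∈ Y`; the maximal such
`h` is the optimal value of the disjoint bilinear programming problem. -/
theorem stmt_6
    (n m q l : ℕ) (hn : 0 < n) (hm : 0 < m) (hq : 0 < q) (hl : 0 < l)
    (C : Matrix (Fin n) (Fin m) ℝ) (A : Matrix (Fin q) (Fin n) ℝ)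
    (B : Matrix (Fin l) (Fin m) ℝ)
    (a : Fin q → ℝ) (b : Fin l → ℝ) (g : Fin n → ℝ) (e : Fin m → ℝ)
    (z : (Fin n → ℝ) → (Fin m → ℝ) → ℝ)
    (hz : ∀ x y, z x y = x ⬝ᵥ C.mulVec y + g ⬝ᵥ x + e ⬝ᵥ y)
    (X : Set (Fin n → ℝ)) (Y : Set (Fin m → ℝ))
    (hX : X = {x | A.mulVec x ≤ a ∧ 0 ≤ x})
    (hY : Y = {y | B.mulVec y ≤ b ∧ 0 ≤ y})
    (hXne : X.Nonempty) (hYne : Y.Nonempty)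
    (hXbd : Bornology.IsBounded X) (hYbd : Bornology.IsBounded Y)
    (h : ℝ) :
    ((¬ ∃ (x : Fin n → ℝ) (y : Fin m → ℝ),
        A.mulVec x ≤ a ∧ x ⬝ᵥ C.mulVec y + g ⬝ᵥ x + e ⬝ᵥ y < h ∧
        B.mulVec y ≤ b ∧ 0 ≤ x ∧ 0 ≤ y) ↔
      (∀ y ∈ Y, ∃ u : Fin q → ℝ,
        -(Aᵀ.mulVec u) ≤ C.mulVec y + g ∧ a ⬝ᵥ u ≤ e ⬝ᵥ y - h ∧ 0 ≤ u)) ∧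
    (∀ zstar : ℝ, IsLeast (Set.image2 z X Y) zstar →
      IsGreatest {h' : ℝ | ∀ y ∈ Y, ∃ u : Fin q → ℝ,
        -(Aᵀ.mulVec u) ≤ C.mulVec y + g ∧ a ⬝ᵥ u ≤ e ⬝ᵥ y - h' ∧ 0 ≤ u} zstar) := by
  subst hX
  subst hY
  have hneX : ∃ x : Fin n → ℝ, A.mulVec x ≤ a ∧ 0 ≤ x := hXne
  have hdot : ∀ (x : Fin n → ℝ) (y : Fin m → ℝ),
      (C.mulVec y + g) ⬝ᵥ x = x ⬝ᵥ C.mulVec y + g ⬝ᵥ x := by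
    intro x y
    rw [add_dotProduct, dotProduct_comm]
  constructor
  · constructor
    · intro hno y hy
      obtain ⟨hyb, hy0⟩ := hy
      refine (per_y_duality A a (C.mulVec y + g) (e ⬝ᵥ y) h hneX hXbd).mp ?_
      intro x hxa hx0
      by_contra hlt
      push_neg at hlt
      exact hno ⟨x, y, hxa, by rw [hdot] at hlt; linarith, hyb, hx0, hy0⟩
    · rintro hall ⟨x, y, hxa, hlt, hyb, hx0, hy0⟩
      obtain ⟨u, hud, hua, hu0⟩ := hall y ⟨hyb, hy0⟩
      have := (per_y_duality A a (C.mulVec y + g) (e ⬝ᵥ y) h hneX hXbd).mpr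
        ⟨u, hud, hua, hu0⟩ x hxa hx0
      rw [hdot] at this
      linarith
  · rintro zstar ⟨hmem, hlb⟩
    obtain ⟨x0, hx0X, y0, hy0Y, hzeq⟩ := hmem
    constructor
    · intro y hy
      refine (per_y_duality A a (C.mulVec y + g) (e ⬝ᵥ y) zstar hneX hXbd).mp ?_
      intro x hxa hx0
      have hx_in : x ∈ {x : Fin n → ℝ | A.mulVec x ≤ a ∧ 0 ≤ x} := ⟨hxa, hx0⟩
      have hle := hlb (Set.mem_image2_of_mem hx_in hy)
      rw [hz] at hle
      rw [hdot]
      linarith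
    · intro h' hh'
      obtain ⟨u, hud, hua, hu0⟩ := hh' y0 hy0Y
      have := (per_y_duality A a (C.mulVec y0 + g) (e ⬝ᵥ y0) h' hneX hXbd).mpr
        ⟨u, hud, hua, hu0⟩ x0 hx0X.1 hx0X.2
      rw [hdot] at this
      rw [← hzeq, hz]
      linarith
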